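/- Let (η_k)_{k≥1} be independent real random variables with sup_{λ>0} λ^α P(|η_k| > λ) ≤ K for all k, where α ∈ (0,1) and K > 0. Then for any sequence (a_k) of real numbers with ∑_k |a_k|^α < ∞, sup_{λ>0} λ^α P(|∑_k a_k η_k| > λ) ≤ r_α K ∑_k |a_k|^α, where r_α = 1 + 1/(1-α). -/

import Mathlib

open MeasureTheory ProbabilityTheory
open scoped ENNReal NNReal

private lemma ofReal_abs_hasSum_le (f : ℕ → ℝ) (s : ℝ) (h : HasSum f s) :
    ENNReal.ofReal |s| ≤ ∑' k, (‖f k‖₊ : ℝ≥0∞) := by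
  by_cases hs : Summable fun k => ‖f k‖₊
  · rw [← Real.enorm_eq_ofReal_abs, enorm_eq_nnnorm, ← ENNReal.coe_tsum hs, ENNReal.coe_le_coe, ← h.tsum_eq]
    exact nnnorm_tsum_le hs
  · have : ∑' k, (‖f k‖₊ : ℝ≥0∞) = ⊤ := by
      by_contra h'
      exact hs (ENNReal.tsum_coe_ne_top_iff_summable.mp h')
    simp [this]

theorem stmt3 {Ω : Type*} [MeasurableSpace Ω] (μ : Measure Ω) [IsProbabilityMeasure μ]
    (η : ℕ → Ω → ℝ) (hmeas : ∀ k, Measurable (η k))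
    (hindep : iIndepFun η μ)
    (K α : ℝ) (hK : 0 < K) (hα : α ∈ Set.Ioo (0 : ℝ) 1)
    (htail : ∀ k, ∀ l : ℝ, 0 < l → l ^ α * (μ {ω | l < |η k ω|}).toReal ≤ K)
    (a : ℕ → ℝ) (hsum : Summable (fun k => |a k| ^ α))
    (S : Ω → ℝ) (hS : ∀ᵐ ω ∂μ, HasSum (fun k => a k * η k ω) (S ω)) :
    ∀ l : ℝ, 0 < l →
      l ^ α * (μ {ω | l < |S ω|}).toReal ≤ (1 + 1 / (1 - α)) * K * ∑' k, |a k| ^ α := by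
  obtain ⟨hα0, hα1⟩ := hα
  have h1α : (0:ℝ) < 1 - α := by linarith
  intro l hl
  set Sg : ℝ := ∑' k, |a k| ^ α with hSgdef
  have hSgnn : 0 ≤ Sg := tsum_nonneg fun k => Real.rpow_nonneg (abs_nonneg _) α
  -- tail bound for a k * η k
  have tail : ∀ k, ∀ t : ℝ, 0 < t →
      μ {ω | t < |a k * η k ω|} ≤ ENNReal.ofReal (K * |a k| ^ α * t ^ (-α)) := by
    intro k t ht
    rcases eq_or_ne (a k) 0 with hak | hak
    · have : {ω | t < |a k * η k ω|} = ∅ := by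
        ext ω; simp [hak, not_lt, ht.le]
      rw [this]; simp
    · have hak' : 0 < |a k| := abs_pos.mpr hak
      have hs : 0 < t / |a k| := div_pos ht hak'
      have hset : {ω | t < |a k * η k ω|} = {ω | t / |a k| < |η k ω|} := by
        ext ω
        rw [Set.mem_setOf_eq, Set.mem_setOf_eq, abs_mul, div_lt_iff₀ hak', mul_comm]
      have hb := htail k (t / |a k|) hs
      have hpow : 0 < (t / |a k|) ^ α := Real.rpow_pos_of_pos hs α
      have hfin : μ {ω | t / |a k| < |η k ω|} ≠ ⊤ := measure_ne_top μ _
      have h2 : (μ {ω | t / |a k| < |η k ω|}).toReal ≤ K / (t / |a k|) ^ α := by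
        rw [le_div_iff₀ hpow]
        linarith [hb]
      have h3 : K / (t / |a k|) ^ α = K * |a k| ^ α * t ^ (-α) := by
        rw [Real.div_rpow ht.le hak'.le, Real.rpow_neg ht.le]
        field_simp
      rw [hset]
      calc μ {ω | t / |a k| < |η k ω|}
          = ENNReal.ofReal (μ {ω | t / |a k| < |η k ω|}).toReal := (ENNReal.ofReal_toReal hfin).symm
        _ ≤ ENNReal.ofReal (K * |a k| ^ α * t ^ (-α)) := ENNReal.ofReal_le_ofReal (h3 ▸ h2)
  -- truncated variables
  set T : ℕ → Ω → ℝ := fun k ω => if |a k * η k ω| ≤ l then a k * η k ω else 0 with hT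
  have hTmeas : ∀ k, Measurable (T k) := by
    intro k
    have h1 : Measurable fun ω => a k * η k ω := (hmeas k).const_mul _
    exact Measurable.ite (measurableSet_le h1.abs measurable_const) h1 measurable_const
  have hTle : ∀ k ω, |T k ω| ≤ l := by
    intro k ω
    simp only [hT]
    split
    · assumption
    · simpa using hl.le
  have hTle2 : ∀ k ω, |T k ω| ≤ |a k * η k ω| := by
    intro k ω
    simp only [hT]
    split
    · exact le_refl _
    · simp; positivity
  -- per-k truncated moment bound
  have trunc : ∀ k, (∫⁻ ω, (‖T k ω‖₊ : ℝ≥0∞) ∂μ)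
      ≤ ENNReal.ofReal (K * l ^ (1 - α) / (1 - α) * |a k| ^ α) := by
    intro k
    have hnn : (0:Ω → ℝ) ≤ᵐ[μ] fun ω => |T k ω| := Filter.Eventually.of_forall fun ω => abs_nonneg _
    have hm : AEMeasurable (fun ω => |T k ω|) μ := (hTmeas k).abs.aemeasurable
    have key : (∫⁻ ω, (‖T k ω‖₊ : ℝ≥0∞) ∂μ) = ∫⁻ t in Set.Ioi (0:ℝ), μ {ω | t < |T k ω|} := by
      simp_rw [← enorm_eq_nnnorm, Real.enorm_eq_ofReal_abs]
      exact lintegral_eq_lintegral_meas_lt μ hnn hm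
    rw [key]
    have step1 : (∫⁻ t in Set.Ioi (0:ℝ), μ {ω | t < |T k ω|})
        ≤ ∫⁻ t in Set.Ioi (0:ℝ),
            (Set.Ioc (0:ℝ) l).indicator (fun t => ENNReal.ofReal (K * |a k| ^ α * t ^ (-α))) t := by
      refine setLIntegral_mono_ae' measurableSet_Ioi (Filter.Eventually.of_forall fun t ht => ?_)
      have ht' : (0:ℝ) < t := ht
      by_cases htl : t ≤ l
      · rw [Set.indicator_of_mem (by exact ⟨ht', htl⟩ : t ∈ Set.Ioc (0:ℝ) l)]
        refine le_trans (measure_mono ?_) (tail k t ht')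
        intro ω hω
        exact lt_of_lt_of_le hω (hTle2 k ω)
      · rw [Set.indicator_of_notMem (fun hmem => htl hmem.2)]
        have : {ω | t < |T k ω|} = ∅ := by
          ext ω
          simp only [Set.mem_setOf_eq, Set.mem_empty_iff_false, iff_false, not_lt]
          exact le_trans (hTle k ω) (le_of_not_ge htl)
        simp [this]
    have step2 : (∫⁻ t in Set.Ioi (0:ℝ),
            (Set.Ioc (0:ℝ) l).indicator (fun t => ENNReal.ofReal (K * |a k| ^ α * t ^ (-α))) t)
        ≤ ∫⁻ t in Set.Ioc (0:ℝ) l, ENNReal.ofReal (K * |a k| ^ α * t ^ (-α)) := by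
      rw [← lintegral_indicator measurableSet_Ioc]
      exact setLIntegral_le_lintegral _ _
    have hInt : IntegrableOn (fun t : ℝ => K * |a k| ^ α * t ^ (-α)) (Set.Ioc 0 l) volume := by
      have h1 : IntervalIntegrable (fun t : ℝ => t ^ (-α)) volume 0 l :=
        intervalIntegral.intervalIntegrable_rpow' (by linarith)
      have h2 : IntegrableOn (fun t : ℝ => t ^ (-α)) (Set.Ioc 0 l) volume := by
        have := intervalIntegrable_iff.mp h1
        rwa [Set.uIoc_of_le hl.le] at this
      exact h2.const_mul _
    have step3 : (∫⁻ t in Set.Ioc (0:ℝ) l, ENNReal.ofReal (K * |a k| ^ α * t ^ (-α)))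
        = ENNReal.ofReal (∫ t in Set.Ioc (0:ℝ) l, K * |a k| ^ α * t ^ (-α)) := by
      rw [ofReal_integral_eq_lintegral_ofReal hInt]
      filter_upwards [ae_restrict_mem measurableSet_Ioc] with t ht
      have ht0 : (0:ℝ) < t := ht.1
      show (0:ℝ) ≤ K * |a k| ^ α * t ^ (-α)
      positivity
    have step4 : (∫ t in Set.Ioc (0:ℝ) l, K * |a k| ^ α * t ^ (-α))
        = K * l ^ (1 - α) / (1 - α) * |a k| ^ α := by
      rw [← intervalIntegral.integral_of_le hl.le]
      rw [intervalIntegral.integral_const_mul]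
      rw [integral_rpow (Or.inl (by linarith))]
      rw [Real.zero_rpow (by linarith)]
      have : -α + 1 = 1 - α := by ring
      rw [this]
      ring
    calc (∫⁻ t in Set.Ioi (0:ℝ), μ {ω | t < |T k ω|})
        ≤ _ := step1
      _ ≤ _ := step2
      _ = _ := step3
      _ = ENNReal.ofReal (K * l ^ (1 - α) / (1 - α) * |a k| ^ α) := by rw [step4]
  -- the dominating function G
  set G : Ω → ℝ≥0∞ := fun ω => ∑' k, (‖T k ω‖₊ : ℝ≥0∞) with hG
  have hGmeas : Measurable G := Measurable.ennreal_tsum fun k => (hTmeas k).nnnorm.coe_nnreal_ennreal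
  have hGint : (∫⁻ ω, G ω ∂μ) ≤ ENNReal.ofReal (K * l ^ (1 - α) / (1 - α) * Sg) := by
    rw [hG]
    rw [lintegral_tsum fun k => ((hTmeas k).nnnorm.coe_nnreal_ennreal).aemeasurable]
    calc (∑' k, ∫⁻ ω, (‖T k ω‖₊ : ℝ≥0∞) ∂μ)
        ≤ ∑' k, ENNReal.ofReal (K * l ^ (1 - α) / (1 - α) * |a k| ^ α) :=
          ENNReal.tsum_le_tsum trunc
      _ = ENNReal.ofReal (∑' k, K * l ^ (1 - α) / (1 - α) * |a k| ^ α) := by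
          rw [ENNReal.ofReal_tsum_of_nonneg]
          · intro k
            have : (0:ℝ) ≤ |a k| ^ α := Real.rpow_nonneg (abs_nonneg _) α
            positivity
          · exact hsum.mul_left _
      _ = ENNReal.ofReal (K * l ^ (1 - α) / (1 - α) * Sg) := by rw [tsum_mul_left]
  -- Markov for G
  have markov : μ {ω | ENNReal.ofReal l ≤ G ω}
      ≤ ENNReal.ofReal (K * l ^ (1 - α) / (1 - α) * Sg / l) := by
    have h0 := mul_meas_ge_le_lintegral₀ (μ := μ) hGmeas.aemeasurable (ENNReal.ofReal l)
    have hl0 : ENNReal.ofReal l ≠ 0 := by simp [hl]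
    have hlt : ENNReal.ofReal l ≠ ⊤ := ENNReal.ofReal_ne_top
    have h1 : μ {ω | ENNReal.ofReal l ≤ G ω} ≤ (∫⁻ ω, G ω ∂μ) / ENNReal.ofReal l := by
      rw [ENNReal.le_div_iff_mul_le (Or.inl hl0) (Or.inl hlt), mul_comm]
      exact h0
    refine h1.trans ?_
    rw [ENNReal.ofReal_div_of_pos hl]
    exact ENNReal.div_le_div_right (hGint) _
  -- union bound
  have union : μ (⋃ k, {ω | l < |a k * η k ω|}) ≤ ENNReal.ofReal (K * l ^ (-α) * Sg) := by
    calc μ (⋃ k, {ω | l < |a k * η k ω|})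
        ≤ ∑' k, μ {ω | l < |a k * η k ω|} := measure_iUnion_le _
      _ ≤ ∑' k, ENNReal.ofReal (K * l ^ (-α) * |a k| ^ α) := by
          refine ENNReal.tsum_le_tsum fun k => (tail k l hl).trans ?_
          exact le_of_eq (by ring_nf)
      _ = ENNReal.ofReal (∑' k, K * l ^ (-α) * |a k| ^ α) := by
          rw [ENNReal.ofReal_tsum_of_nonneg]
          · intro k
            have h0 : (0:ℝ) ≤ |a k| ^ α := Real.rpow_nonneg (abs_nonneg _) α
            have h1 : (0:ℝ) ≤ l ^ (-α) := Real.rpow_nonneg hl.le _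
            positivity
          · exact hsum.mul_left _
      _ = ENNReal.ofReal (K * l ^ (-α) * Sg) := by rw [tsum_mul_left]
  -- inclusion
  have incl : {ω | l < |S ω|} ⊆ {ω | ¬ HasSum (fun k => a k * η k ω) (S ω)}
      ∪ ((⋃ k, {ω | l < |a k * η k ω|}) ∪ {ω | ENNReal.ofReal l ≤ G ω}) := by
    intro ω hω
    by_cases hhs : HasSum (fun k => a k * η k ω) (S ω)
    · right
      by_cases hall : ∀ k, |a k * η k ω| ≤ l
      · right
        have hTeq : (fun k => T k ω) = fun k => a k * η k ω := by
          funext k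
          simp only [hT]
          rw [if_pos (hall k)]
        have hhs' : HasSum (fun k => T k ω) (S ω) := by rw [hTeq]; exact hhs
        have h1 : ENNReal.ofReal |S ω| ≤ G ω := ofReal_abs_hasSum_le _ _ hhs'
        exact le_trans (ENNReal.ofReal_le_ofReal (le_of_lt hω)) h1
      · left
        push_neg at hall
        obtain ⟨k, hk⟩ := hall
        exact Set.mem_iUnion.mpr ⟨k, hk⟩
    · left
      exact hhs
  have hnull : μ {ω | ¬ HasSum (fun k => a k * η k ω) (S ω)} = 0 := by
    exact ae_iff.mp hS
  -- combine
  have hmain : μ {ω | l < |S ω|}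
      ≤ ENNReal.ofReal (K * l ^ (-α) * Sg) + ENNReal.ofReal (K * l ^ (1 - α) / (1 - α) * Sg / l) := by
    calc μ {ω | l < |S ω|}
        ≤ μ ({ω | ¬ HasSum (fun k => a k * η k ω) (S ω)}
            ∪ ((⋃ k, {ω | l < |a k * η k ω|}) ∪ {ω | ENNReal.ofReal l ≤ G ω})) := measure_mono incl
      _ ≤ μ {ω | ¬ HasSum (fun k => a k * η k ω) (S ω)}
            + μ ((⋃ k, {ω | l < |a k * η k ω|}) ∪ {ω | ENNReal.ofReal l ≤ G ω}) := measure_union_le _ _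
      _ ≤ 0 + (μ (⋃ k, {ω | l < |a k * η k ω|}) + μ {ω | ENNReal.ofReal l ≤ G ω}) := by
          rw [hnull]
          exact add_le_add le_rfl (measure_union_le _ _)
      _ ≤ 0 + (ENNReal.ofReal (K * l ^ (-α) * Sg)
            + ENNReal.ofReal (K * l ^ (1 - α) / (1 - α) * Sg / l)) := by
          exact add_le_add le_rfl (add_le_add union markov)
      _ = _ := by rw [zero_add]
  -- conclude
  set B : ℝ := K * l ^ (-α) * Sg + K * l ^ (1 - α) / (1 - α) * Sg / l with hB
  have hBnn2 : 0 ≤ K * l ^ (1 - α) / (1 - α) * Sg / l := by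
    have h1 : (0:ℝ) ≤ l ^ (1 - α) := Real.rpow_nonneg hl.le _
    positivity
  have hBnn1 : 0 ≤ K * l ^ (-α) * Sg := by
    have h1 : (0:ℝ) ≤ l ^ (-α) := Real.rpow_nonneg hl.le _
    positivity
  have hle : (μ {ω | l < |S ω|}).toReal ≤ B := by
    refine ENNReal.toReal_le_of_le_ofReal (by rw [hB]; linarith) ?_
    rw [hB, ENNReal.ofReal_add hBnn1 hBnn2]
    exact hmain
  have hfinal : l ^ α * B = (1 + 1 / (1 - α)) * K * Sg := by
    have hpq : l ^ α * l ^ (1 - α) = l := by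
      rw [← Real.rpow_add hl]; norm_num
    have hinv : l ^ (-α) = (l ^ α)⁻¹ := by
      rw [Real.rpow_neg hl.le]
    have hp : (0:ℝ) < l ^ α := Real.rpow_pos_of_pos hl α
    have hq : l ^ (1 - α) = l / l ^ α := by
      rw [eq_div_iff hp.ne']
      linarith [hpq]
    rw [hB, hinv, hq]
    field_simp
  have hlα : (0:ℝ) < l ^ α := Real.rpow_pos_of_pos hl α
  calc l ^ α * (μ {ω | l < |S ω|}).toReal
      ≤ l ^ α * B := by exact mul_le_mul_of_nonneg_left hle hlα.le
    _ = (1 + 1 / (1 - α)) * K * Sg := hfinal
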